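/- Let G be a graph and S ⊆ V(G). If for every connected component C of G − S the neighborhood N_G(V(C)) is a proper subset of S, then there exists a rooted tree-decomposition (T, X) of G whose root bag equals S such that every node t with |X_t| ≥ |S| + 1 is a non-root leaf whose parent p satisfies |X_p| ≤ |S| − 1. -/

import Mathlib

open SimpleGraph

/-- A tree-decomposition of the graph `G` over the tree `τ` with bags `X`. -/
structure IsTreeDecomp {V : Type} {T : Type} (G : SimpleGraph V) (τ : SimpleGraph T)
    (X : T → Set V) : Prop where
  isTree : τ.IsTree
  coverV : ∀ v : V, ∃ t, v ∈ X t
  coverE : ∀ ⦃u v : V⦄, G.Adj u v → ∃ t, u ∈ X t ∧ v ∈ X t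
  subtreeConn : ∀ v : V, (τ.induce {t | v ∈ X t}).Connected

/-- The graph `G` has tree-width at most `w`. -/
def TreewidthAtMost {V : Type} (G : SimpleGraph V) (w : ℤ) : Prop :=
  ∃ (T : Type) (τ : SimpleGraph T) (X : T → Set V),
    IsTreeDecomp G τ X ∧ ∀ t, ((X t).ncard : ℤ) ≤ w + 1

/-- `H` is a minor of `G`: there is a family of nonempty, pairwise disjoint, connected
branch sets in `G`, one for each vertex of `H`, with edges of `H` realized by edges of `G`. -/
def IsMinorOf {W V : Type} (H : SimpleGraph W) (G : SimpleGraph V) : Prop :=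
  ∃ f : W → Set V, (∀ w, (f w).Nonempty) ∧ (∀ w, (G.induce (f w)).Connected) ∧
    (Pairwise fun w₁ w₂ => Disjoint (f w₁) (f w₂)) ∧
    ∀ ⦃w₁ w₂⦄, H.Adj w₁ w₂ → ∃ u ∈ f w₁, ∃ x ∈ f w₂, G.Adj u x

/-- `F⁺`: the graph obtained from `F` by adding a new apex vertex adjacent to all of `F`. -/
def addApex {α : Type} (F : SimpleGraph α) : SimpleGraph (Option α) :=
  SimpleGraph.fromRel (fun a b => (a = none ∧ b ≠ none) ∨
    ∃ x y, a = some x ∧ b = some y ∧ F.Adj x y)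

/-- The neighbourhood `N_G(X)` of a vertex set `X`. -/
def nbhd {V : Type} (G : SimpleGraph V) (X : Set V) : Set V :=
  {v | v ∉ X ∧ ∃ u ∈ X, G.Adj u v}

lemma walk_last_edge {V : Type} {G : SimpleGraph V} {a v : V} (w : G.Walk a v)
    (hw : 0 < w.length) :
    ∃ x, G.Adj x v ∧ s(x, v) ∈ w.edges ∧ x ∈ w.support := by
  induction w with
  | nil => simp at hw
  | @cons u b v h q ih =>
    rcases Nat.eq_zero_or_pos q.length with h0 | hpos
    · cases q with
      | nil => exact ⟨u, h, by simp, by simp⟩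
      | cons h' q' => simp at h0
    · obtain ⟨x, hx1, hx2, hx3⟩ := ih hpos
      exact ⟨x, hx1, by simp [hx2], by simp [hx3]⟩

lemma fromRel_parent_isTree {T : Type} (root : T) (parent : T → T) (rank : T → ℕ)
    (hr : ∀ t, t ≠ root → rank (parent t) < rank t) :
    (SimpleGraph.fromRel (fun a b => a ≠ root ∧ parent a = b)).IsTree := by
  classical
  haveI : Nonempty T := ⟨root⟩
  set τ := SimpleGraph.fromRel (fun a b => a ≠ root ∧ parent a = b) with hτ
  have hadj : ∀ a b, τ.Adj a b ↔ a ≠ b ∧ ((a ≠ root ∧ parent a = b) ∨ (b ≠ root ∧ parent b = a)) := by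
    intro a b; rw [hτ, SimpleGraph.fromRel_adj]
  constructor
  · -- connected
    have hreach : ∀ n t, rank t ≤ n → τ.Reachable t root := by
      intro n
      induction n with
      | zero =>
        intro t ht
        by_cases h : t = root
        · exact h ▸ Reachable.refl _
        · exact absurd (Nat.lt_of_lt_of_le (hr t h) ht) (Nat.not_lt_zero _)
      | succ n ih =>
        intro t ht
        by_cases h : t = root
        · exact h ▸ Reachable.refl _
        · have h1 : rank (parent t) < rank t := hr t h
          have h2 : τ.Adj t (parent t) := by
            rw [hadj]
            refine ⟨fun he => ?_, Or.inl ⟨h, rfl⟩⟩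
            · rw [← he] at h1; omega
          exact h2.reachable.trans (ih (parent t) (by omega))
    refine ⟨fun a b => ?_⟩
    exact (hreach _ a le_rfl).trans (hreach _ b le_rfl).symm
  · -- acyclic
    intro v c hc
    obtain ⟨m, hm, hmax⟩ := c.support.toFinset.exists_max_image rank
      ⟨v, by simp [Walk.start_mem_support]⟩
    rw [List.mem_toFinset] at hm
    have hmax' : ∀ x ∈ c.support, rank x ≤ rank m := fun x hx =>
      hmax x (List.mem_toFinset.2 hx)
    have key : ∀ (c' : τ.Walk m m), (∀ x ∈ c'.support, rank x ≤ rank m) → ¬ c'.IsCycle := by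
      intro c' hsup hcyc
      cases c' with
      | nil => exact hcyc.ne_nil rfl
      | @cons _ b _ hAdj q =>
        have hlen := hcyc.three_le_length
        rw [Walk.cons_isCycle_iff] at hcyc
        obtain ⟨hq, hne⟩ := hcyc
        have hbsup : b ∈ Walk.support (Walk.cons hAdj q) := by simp
        have hb : parent m = b ∧ m ≠ root := by
          rcases ((hadj m b).1 hAdj).2 with ⟨h1, h2⟩ | ⟨h1, h2⟩
          · exact ⟨h2, h1⟩
          · have := hr b h1
            rw [h2] at this
            exact absurd (hsup b hbsup) (by omega)
        have hqlen : 0 < q.length := by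
          simp only [Walk.length_cons] at hlen; omega
        obtain ⟨x, hx1, hx2, hx3⟩ := walk_last_edge q hqlen
        have hxeq : x = b := by
          rcases ((hadj x m).1 hx1).2 with ⟨h1, h2⟩ | ⟨h1, h2⟩
          · have h3 := hr x h1
            rw [h2] at h3
            have h4 : x ∈ Walk.support (Walk.cons hAdj q) := by simp [hx3]
            exact absurd (hsup x h4) (by omega)
          · rw [← hb.1, h2]
        rw [hxeq] at hx2
        exact hne (by rwa [Sym2.eq_swap] at hx2)
    refine key (c.rotate m hm) ?_ (hc.rotate hm)
    intro x hx
    rcases eq_or_ne x m with rfl | hxm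
    · exact le_rfl
    · have hx' : x ∈ (c.rotate m hm).support.tail := by
        have h5 := (c.rotate m hm).support_eq_cons
        rw [h5] at hx
        rcases List.mem_cons.1 hx with h | h
        · exact absurd h hxm
        · exact h
      exact hmax' x (List.mem_of_mem_tail ((Walk.support_rotate c m hm).mem_iff.1 hx'))

/-- parent function for the octopus tree -/
def octParent {α : Type} : Option (α × Bool) → Option (α × Bool)
  | none => none
  | some (c, true) => some (c, false)
  | some (_, false) => none

/-- rank function for the octopus tree -/
def octRank {α : Type} : Option (α × Bool) → ℕ
  | none => 0
  | some (_, false) => 1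
  | some (_, true) => 2

/-- the octopus tree -/
def octTree (α : Type) : SimpleGraph (Option (α × Bool)) :=
  SimpleGraph.fromRel (fun a b => a ≠ none ∧ octParent a = b)

/-- bags of the octopus decomposition -/
def octBag {V : Type} (G : SimpleGraph V) (S : Set V) :
    Option ((G.induce Sᶜ).ConnectedComponent × Bool) → Set V
  | none => S
  | some (c, false) => nbhd G (Subtype.val '' c.supp)
  | some (c, true) => (Subtype.val '' c.supp) ∪ nbhd G (Subtype.val '' c.supp)

lemma octTree_isTree (α : Type) : (octTree α).IsTree := by
  apply fromRel_parent_isTree none octParent octRank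
  rintro (_ | ⟨c, _ | _⟩) ht
  · exact absurd rfl ht
  · simp [octParent, octRank]
  · simp [octParent, octRank]

lemma octTree_adj {α : Type} (a b : Option (α × Bool)) :
    (octTree α).Adj a b ↔ a ≠ b ∧ ((a ≠ none ∧ octParent a = b) ∨ (b ≠ none ∧ octParent b = a)) :=
  SimpleGraph.fromRel_adj _ _ _

theorem stmt3 {V : Type} [Fintype V] (G : SimpleGraph V) (S : Set V)
    (h : ∀ c : (G.induce Sᶜ).ConnectedComponent, nbhd G (Subtype.val '' c.supp) ⊂ S) :
    ∃ (T : Type) (τ : SimpleGraph T) (X : T → Set V) (r : T),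
      IsTreeDecomp G τ X ∧ X r = S ∧
      ∀ t, S.ncard + 1 ≤ (X t).ncard →
        t ≠ r ∧ ∃ p, τ.Adj t p ∧ (∀ q, τ.Adj t q → q = p) ∧
          ((X p).ncard : ℤ) ≤ (S.ncard : ℤ) - 1 := by
  classical
  set Comp := (G.induce Sᶜ).ConnectedComponent with hComp
  let img : Comp → Set V := fun c => Subtype.val '' c.supp
  have himg : ∀ c, img c ⊆ Sᶜ := by
    rintro c _ ⟨⟨x, hx⟩, _, rfl⟩; exact hx
  have hnb : ∀ c, nbhd G (img c) ⊆ S := fun c => (h c).subset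
  have hmem : ∀ (v : V) (hv : v ∈ Sᶜ) (c : Comp),
      v ∈ img c ↔ (G.induce Sᶜ).connectedComponentMk ⟨v, hv⟩ = c := by
    intro v hv c
    constructor
    · rintro ⟨x, hx, rfl⟩
      have h2 : (⟨x.val, hv⟩ : ↥Sᶜ) = x := Subtype.ext rfl
      rw [h2]
      exact (ConnectedComponent.mem_supp_iff c x).1 hx
    · intro hc
      exact ⟨⟨v, hv⟩, (ConnectedComponent.mem_supp_iff c ⟨v, hv⟩).2 hc, rfl⟩
  have hsame : ∀ {u v : V} (hu : u ∈ Sᶜ) (hv : v ∈ Sᶜ), G.Adj u v →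
      (G.induce Sᶜ).connectedComponentMk ⟨u, hu⟩ = (G.induce Sᶜ).connectedComponentMk ⟨v, hv⟩ := by
    intro u v hu hv huv
    apply ConnectedComponent.sound
    apply Adj.reachable
    simpa [SimpleGraph.comap_adj] using huv
  refine ⟨Option (Comp × Bool), octTree Comp, octBag G S, none, ?_, rfl, ?_⟩
  · constructor
    · exact octTree_isTree Comp
    · -- coverV
      intro v
      by_cases hv : v ∈ S
      · exact ⟨none, hv⟩
      · refine ⟨some ((G.induce Sᶜ).connectedComponentMk ⟨v, hv⟩, true), Or.inl ?_⟩
        exact (hmem v hv _).2 rfl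
    · -- coverE
      intro u v huv
      by_cases hu : u ∈ S <;> by_cases hv : v ∈ S
      · exact ⟨none, hu, hv⟩
      · refine ⟨some ((G.induce Sᶜ).connectedComponentMk ⟨v, hv⟩, true), Or.inr ?_, Or.inl ?_⟩
        · refine ⟨fun hc => (himg _ hc) hu, v, (hmem v hv _).2 rfl, huv.symm⟩
        · exact (hmem v hv _).2 rfl
      · refine ⟨some ((G.induce Sᶜ).connectedComponentMk ⟨u, hu⟩, true), Or.inl ?_, Or.inr ?_⟩
        · exact (hmem u hu _).2 rfl
        · refine ⟨fun hc => (himg _ hc) hv, u, (hmem u hu _).2 rfl, huv⟩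
      · refine ⟨some ((G.induce Sᶜ).connectedComponentMk ⟨u, hu⟩, true), Or.inl ?_, Or.inl ?_⟩
        · exact (hmem u hu _).2 rfl
        · rw [hmem v hv _]
          exact (hsame hu hv huv).symm
    · -- subtreeConn
      intro v
      set A : Set (Option (Comp × Bool)) := {t | v ∈ octBag G S t} with hA
      by_cases hv : v ∈ S
      · have hroot : none ∈ A := hv
        have hindadj : ∀ (a b : A), (octTree Comp).Adj a.val b.val →
            ((octTree Comp).induce A).Adj a b := by
          intro a b hab
          simpa [SimpleGraph.comap_adj] using hab
        have hmidreach : ∀ (c : Comp) (hmid : some (c, false) ∈ A),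
            ((octTree Comp).induce A).Reachable ⟨some (c, false), hmid⟩ ⟨none, hroot⟩ := by
          intro c hmid
          refine Adj.reachable (hindadj ⟨_, hmid⟩ ⟨_, hroot⟩ ?_)
          rw [octTree_adj]
          exact ⟨by simp, Or.inl ⟨by simp, rfl⟩⟩
        have hstep : ∀ (t : Option (Comp × Bool)) (ht : t ∈ A),
            ((octTree Comp).induce A).Reachable ⟨t, ht⟩ ⟨none, hroot⟩ := by
          rintro (_ | ⟨c, b⟩) ht
          · exact Reachable.refl _
          · cases b with
            | false => exact hmidreach c ht
            | true =>
              have hmidmem : v ∈ nbhd G (img c) := by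
                rcases ht with hin | hin
                · exact absurd hv (himg c hin)
                · exact hin
              have hmid : some (c, false) ∈ A := hmidmem
              have h1 : ((octTree Comp).induce A).Adj ⟨some (c, true), ht⟩ ⟨some (c, false), hmid⟩ := by
                apply hindadj
                rw [octTree_adj]
                exact ⟨by simp, Or.inl ⟨by simp, rfl⟩⟩
              exact h1.reachable.trans (hmidreach c hmid)
        haveI : Nonempty ↑A := ⟨⟨none, hroot⟩⟩
        refine ⟨fun a b => ?_⟩
        exact (hstep a.val a.prop).trans (hstep b.val b.prop).symm
      · -- v ∉ S : the set of bags containing v is a singleton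
        have hc0 : some ((G.induce Sᶜ).connectedComponentMk ⟨v, hv⟩, true) ∈ A :=
          Or.inl ((hmem v hv _).2 rfl)
        have huniq : ∀ t ∈ A, t = some ((G.induce Sᶜ).connectedComponentMk ⟨v, hv⟩, true) := by
          rintro (_ | ⟨c, b⟩) ht
          · exact absurd ht hv
          · cases b with
            | false => exact absurd (hnb c ht) hv
            | true =>
              rcases ht with hin | hin
              · have := (hmem v hv c).1 hin
                rw [this]
              · exact absurd (hnb c hin) hv
        haveI : Nonempty ↑A := ⟨⟨_, hc0⟩⟩
        constructor
        · intro a b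
          have : a = b := Subtype.ext ((huniq a.val a.prop).trans (huniq b.val b.prop).symm)
          rw [this]
  · -- the leaf condition
    intro t ht
    have hfin : S.Finite := Set.toFinite S
    have hlt : ∀ c : Comp, (nbhd G (Subtype.val '' c.supp)).ncard < S.ncard :=
      fun c => Set.ncard_lt_ncard (h c) hfin
    match t with
    | none => simp only [octBag] at ht; omega
    | some (c, false) =>
      exfalso
      have := hlt c
      simp only [octBag] at ht
      omega
    | some (c, true) =>
      refine ⟨by simp, some (c, false), ?_, ?_, ?_⟩
      · rw [octTree_adj]
        exact ⟨by simp, Or.inl ⟨by simp, rfl⟩⟩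
      · rintro (_ | ⟨d, b⟩) hq
        · rw [octTree_adj] at hq
          rcases hq.2 with ⟨_, h2⟩ | ⟨h1, _⟩
          · exact h2.symm ▸ rfl
          · exact absurd rfl h1
        · rw [octTree_adj] at hq
          rcases hq.2 with ⟨_, h2⟩ | ⟨_, h2⟩
          · simp only [octParent] at h2
            cases b <;> simp_all [octParent]
          · cases b <;> simp_all [octParent]
      · have := hlt c
        simp only [octBag]
        omega
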